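/- arXiv:1301.0489 — 5 statements merged into one kernel-verified Lean document; each statement's English description precedes it below -/
import Mathlib

section
/- Let $U_1, U_2, U_3$ be subspaces of a vector space $V$, let $U = U_1 \times U_2 \times U_3 \subseteq V \times V \times V$, and let $Y = \{(v,v,v) : v \in V\}$ be the diagonal. Then $V \times V \times V = U + Y$ if and only if $V = U_1 + (U_2 \cap U_3)$, $V = U_2 + (U_3 \cap U_1)$, and $V = U_3 + (U_1 \cap U_2)$. -/
/-- Lemma on three subspaces: `V³ = (U₁ × U₂ × U₃) + diag(V)` iff
`V = U₁ + (U₂ ∩ U₃) = U₂ + (U₃ ∩ U₁) = U₃ + (U₁ ∩ U₂)`. -/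
theorem stmt0 {K V : Type*} [Field K] [AddCommGroup V] [Module K V]
    (U₁ U₂ U₃ : Submodule K V) :
    (U₁.prod (U₂.prod U₃)) ⊔
        LinearMap.range ((LinearMap.id : V →ₗ[K] V).prod
          ((LinearMap.id : V →ₗ[K] V).prod (LinearMap.id : V →ₗ[K] V))) = ⊤ ↔
      (U₁ ⊔ (U₂ ⊓ U₃) = ⊤ ∧ U₂ ⊔ (U₃ ⊓ U₁) = ⊤ ∧ U₃ ⊔ (U₁ ⊓ U₂) = ⊤) := by
  constructor
  · intro h
    refine ⟨?_, ?_, ?_⟩ <;> rw [eq_top_iff] <;> intro v _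
    · have hv : ((v, 0, 0) : V × V × V) ∈ (⊤ : Submodule K (V × V × V)) := trivial
      rw [← h] at hv
      obtain ⟨u, hu, w, hw, huw⟩ := Submodule.mem_sup.mp hv
      obtain ⟨t, ht⟩ := hw
      simp only [LinearMap.prod_apply, LinearMap.id_coe, id_eq, Pi.prod] at ht
      subst ht
      obtain ⟨hu1, hu2, hu3⟩ := hu
      have h1 : u.1 + t = v := congrArg Prod.fst huw
      have h2 : u.2.1 + t = 0 := congrArg (fun p => p.2.1) huw
      have h3 : u.2.2 + t = 0 := congrArg (fun p => p.2.2) huw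
      refine Submodule.mem_sup.mpr ⟨u.1, hu1, t, ⟨?_, ?_⟩, h1⟩
      · have : t = -u.2.1 := eq_neg_of_add_eq_zero_right h2
        rw [this]; exact neg_mem hu2
      · have : t = -u.2.2 := eq_neg_of_add_eq_zero_right h3
        rw [this]; exact neg_mem hu3
    · have hv : ((0, v, 0) : V × V × V) ∈ (⊤ : Submodule K (V × V × V)) := trivial
      rw [← h] at hv
      obtain ⟨u, hu, w, hw, huw⟩ := Submodule.mem_sup.mp hv
      obtain ⟨t, ht⟩ := hw
      simp only [LinearMap.prod_apply, LinearMap.id_coe, id_eq, Pi.prod] at ht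
      subst ht
      obtain ⟨hu1, hu2, hu3⟩ := hu
      have h1 : u.1 + t = 0 := congrArg Prod.fst huw
      have h2 : u.2.1 + t = v := congrArg (fun p => p.2.1) huw
      have h3 : u.2.2 + t = 0 := congrArg (fun p => p.2.2) huw
      refine Submodule.mem_sup.mpr ⟨u.2.1, hu2, t, ⟨?_, ?_⟩, h2⟩
      · have : t = -u.2.2 := eq_neg_of_add_eq_zero_right h3
        rw [this]; exact neg_mem hu3
      · have : t = -u.1 := eq_neg_of_add_eq_zero_right h1
        rw [this]; exact neg_mem hu1
    · have hv : ((0, 0, v) : V × V × V) ∈ (⊤ : Submodule K (V × V × V)) := trivial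
      rw [← h] at hv
      obtain ⟨u, hu, w, hw, huw⟩ := Submodule.mem_sup.mp hv
      obtain ⟨t, ht⟩ := hw
      simp only [LinearMap.prod_apply, LinearMap.id_coe, id_eq, Pi.prod] at ht
      subst ht
      obtain ⟨hu1, hu2, hu3⟩ := hu
      have h1 : u.1 + t = 0 := congrArg Prod.fst huw
      have h2 : u.2.1 + t = 0 := congrArg (fun p => p.2.1) huw
      have h3 : u.2.2 + t = v := congrArg (fun p => p.2.2) huw
      refine Submodule.mem_sup.mpr ⟨u.2.2, hu3, t, ⟨?_, ?_⟩, h3⟩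
      · have : t = -u.1 := eq_neg_of_add_eq_zero_right h1
        rw [this]; exact neg_mem hu1
      · have : t = -u.2.1 := eq_neg_of_add_eq_zero_right h2
        rw [this]; exact neg_mem hu2
  · rintro ⟨h1, h2, h3⟩
    rw [eq_top_iff]
    rintro ⟨x, y, z⟩ -
    set S := (U₁.prod (U₂.prod U₃)) ⊔
        LinearMap.range ((LinearMap.id : V →ₗ[K] V).prod
          ((LinearMap.id : V →ₗ[K] V).prod (LinearMap.id : V →ₗ[K] V))) with hS
    have hx : ((x, 0, 0) : V × V × V) ∈ S := by
      have : x ∈ U₁ ⊔ (U₂ ⊓ U₃) := h1 ▸ trivial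
      obtain ⟨a, ha, b, ⟨hb2, hb3⟩, hab⟩ := Submodule.mem_sup.mp this
      refine Submodule.mem_sup.mpr ⟨(a, -b, -b), ⟨ha, neg_mem hb2, neg_mem hb3⟩, (b, b, b), ⟨b, rfl⟩, ?_⟩
      simp [Prod.ext_iff, hab]
    have hy : ((0, y, 0) : V × V × V) ∈ S := by
      have : y ∈ U₂ ⊔ (U₃ ⊓ U₁) := h2 ▸ trivial
      obtain ⟨a, ha, b, ⟨hb3, hb1⟩, hab⟩ := Submodule.mem_sup.mp this
      refine Submodule.mem_sup.mpr ⟨(-b, a, -b), ⟨neg_mem hb1, ha, neg_mem hb3⟩, (b, b, b), ⟨b, rfl⟩, ?_⟩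
      simp [Prod.ext_iff, hab]
    have hz : ((0, 0, z) : V × V × V) ∈ S := by
      have : z ∈ U₃ ⊔ (U₁ ⊓ U₂) := h3 ▸ trivial
      obtain ⟨a, ha, b, ⟨hb1, hb2⟩, hab⟩ := Submodule.mem_sup.mp this
      refine Submodule.mem_sup.mpr ⟨(-b, -b, a), ⟨neg_mem hb1, neg_mem hb2, ha⟩, (b, b, b), ⟨b, rfl⟩, ?_⟩
      simp [Prod.ext_iff, hab]
    have := add_mem (add_mem hx hy) hz
    simpa using this
end

section
/- Let $\ell_1, \ell_2, \ell_3$ be lines through the origin in $\mathbb{R}^n$. If for every triple of points $z_1, z_2, z_3 \in \mathbb{R}^n$ there exists a rigid motion $g$ of $\mathbb{R}^n$ with $g(z_j) \in \ell_j$ for $j = 1, 2, 3$, then $\dim(\ell_1 + \ell_2 + \ell_3) \le 2$. -/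
/-- If every triple of points of `ℝⁿ` can be moved by a rigid motion so that the
`j`-th point lands on the line `ℓⱼ` through the origin, then the three lines span
a subspace of dimension at most `2`. -/
theorem stmt2 {n : ℕ}
    (ℓ₁ ℓ₂ ℓ₃ : Submodule ℝ (EuclideanSpace ℝ (Fin n)))
    (h₁ : Module.finrank ℝ ℓ₁ = 1) (h₂ : Module.finrank ℝ ℓ₂ = 1)
    (h₃ : Module.finrank ℝ ℓ₃ = 1)
    (h : ∀ z₁ z₂ z₃ : EuclideanSpace ℝ (Fin n),
      ∃ g : EuclideanSpace ℝ (Fin n) ≃ᵢ EuclideanSpace ℝ (Fin n),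
        g z₁ ∈ ℓ₁ ∧ g z₂ ∈ ℓ₂ ∧ g z₃ ∈ ℓ₃) :
    Module.finrank ℝ ↥(ℓ₁ ⊔ ℓ₂ ⊔ ℓ₃) ≤ 2 := by
  by_contra hle
  push_neg at hle
  rw [sup_assoc] at hle
  set s := ℓ₂ ⊔ ℓ₃ with hs
  have e23 := Submodule.finrank_sup_add_finrank_inf_eq ℓ₂ ℓ₃
  rw [← hs] at e23
  have e1s := Submodule.finrank_sup_add_finrank_inf_eq ℓ₁ s
  have hs2 : Module.finrank ℝ s ≤ 2 := by omega
  have hinf1 : Module.finrank ℝ ↥(ℓ₁ ⊓ s) = 0 := by omega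
  have hinf23 : Module.finrank ℝ ↥(ℓ₂ ⊓ ℓ₃) = 0 := by omega
  have hb1 : ℓ₁ ⊓ s = ⊥ := Submodule.finrank_eq_zero.mp hinf1
  have hb23 : ℓ₂ ⊓ ℓ₃ = ⊥ := Submodule.finrank_eq_zero.mp hinf23
  -- pick a nonzero vector v ∈ ℓ₁
  have hne : ℓ₁ ≠ ⊥ := by
    intro hbot
    rw [hbot, finrank_bot] at h₁
    exact one_ne_zero h₁.symm
  obtain ⟨v, hv, hv0⟩ := Submodule.ne_bot_iff ℓ₁ |>.mp hne
  obtain ⟨g, hg1, hg2, hg3⟩ := h 0 v ((2 : ℝ) • v)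
  have hmid : v = midpoint ℝ (0 : EuclideanSpace ℝ (Fin n)) ((2 : ℝ) • v) := by
    rw [midpoint_eq_smul_add]
    simp
  have hkey : g v = midpoint ℝ (g 0) (g ((2 : ℝ) • v)) := by
    conv_lhs => rw [hmid]
    exact g.map_midpoint _ _
  have hsum : g 0 + g ((2 : ℝ) • v) = g v + g v := by
    rw [hkey]
    exact (midpoint_add_self (R := ℝ) (g 0) (g ((2 : ℝ) • v))).symm
  -- g 0 ∈ ℓ₁ ⊓ s, hence 0
  have hmem_s : g 0 ∈ s := by
    have heq : g 0 = (g v + g v) - g ((2 : ℝ) • v) := by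
      rw [← hsum]; abel
    rw [heq]
    exact Submodule.sub_mem _ (Submodule.mem_sup_left (Submodule.add_mem _ hg2 hg2))
      (Submodule.mem_sup_right hg3)
  have hp1 : g 0 = 0 := by
    have : g 0 ∈ ℓ₁ ⊓ s := ⟨hg1, hmem_s⟩
    rwa [hb1, Submodule.mem_bot] at this
  have hp3 : g ((2 : ℝ) • v) = 0 := by
    rw [hp1, zero_add] at hsum
    have : g ((2 : ℝ) • v) ∈ ℓ₂ ⊓ ℓ₃ :=
      ⟨hsum ▸ Submodule.add_mem _ hg2 hg2, hg3⟩
    rwa [hb23, Submodule.mem_bot] at this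
  have h2v : (2 : ℝ) • v = (0 : EuclideanSpace ℝ (Fin n)) :=
    g.injective (hp3.trans hp1.symm)
  exact hv0 ((smul_eq_zero.mp h2v).resolve_left two_ne_zero)
end

section
/- Let $\ell_1, \ell_2, \ell_3$ be lines through the origin in $\mathbb{R}^2$ (not all necessarily distinct). Then for every triple of points $z_1, z_2, z_3 \in \mathbb{R}^2$, provided the three lines do not all coincide, there exists a rigid motion $g$ of $\mathbb{R}^2$ with $g(z_j) \in \ell_j$ for $j = 1, 2, 3$. -/
open Complex

noncomputable section Stmt3Aux

private lemma memSpanIff (u : ℂ) (hu : u ≠ 0) (x : ℂ) :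
    x ∈ Submodule.span ℝ {u} ↔ (x * (starRingEnd ℂ) u).im = 0 := by
  constructor
  · intro h
    obtain ⟨c, rfl⟩ := Submodule.mem_span_singleton.1 h
    simp [Complex.mul_im, Complex.smul_re, Complex.smul_im]
    ring
  · intro h
    refine Submodule.mem_span_singleton.2 ⟨(x * (starRingEnd ℂ) u).re / Complex.normSq u, ?_⟩
    have hn : (Complex.normSq u : ℂ) ≠ 0 := by simpa using hu
    have hre : (((x * (starRingEnd ℂ) u).re : ℝ) : ℂ) = x * (starRingEnd ℂ) u := by
      apply Complex.ext
      · simp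
      · simp [h]
    rw [Complex.real_smul, Complex.ofReal_div, hre, div_mul_eq_mul_div, div_eq_iff hn]
    linear_combination x * Complex.mul_conj u

private def sX (u v : ℂ) : ℝ := v.re * u.im - v.im * u.re
private def sY (u v : ℂ) : ℝ := -(v.re * u.re + v.im * u.im)
private def Dd (u₁ u₂ : ℂ) : ℝ := u₁.im * u₂.re - u₁.re * u₂.im
private def sS (u v : ℂ) (x y : ℝ) : ℝ := sX u v * x + sY u v * y
private def Pp (u₁ u₂ v₁ v₂ : ℂ) (x y : ℝ) : ℝ :=
  (sS u₂ v₂ x y * u₁.re - sS u₁ v₁ x y * u₂.re) / Dd u₁ u₂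
private def Qq (u₁ u₂ v₁ v₂ : ℂ) (x y : ℝ) : ℝ :=
  (sS u₂ v₂ x y * u₁.im - sS u₁ v₁ x y * u₂.im) / Dd u₁ u₂
private def Aa (u₁ u₂ u₃ v₁ v₂ v₃ : ℂ) : ℝ :=
  v₃.im * u₃.re - v₃.re * u₃.im +
    ((sX u₂ v₂ * u₁.im - sX u₁ v₁ * u₂.im) * u₃.re -
      (sX u₂ v₂ * u₁.re - sX u₁ v₁ * u₂.re) * u₃.im) / Dd u₁ u₂
private def Bb (u₁ u₂ u₃ v₁ v₂ v₃ : ℂ) : ℝ :=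
  v₃.re * u₃.re + v₃.im * u₃.im +
    ((sY u₂ v₂ * u₁.im - sY u₁ v₁ * u₂.im) * u₃.re -
      (sY u₂ v₂ * u₁.re - sY u₁ v₁ * u₂.re) * u₃.im) / Dd u₁ u₂

private lemma aux1 (u₁ u₂ v₁ v₂ : ℂ) (hD : Dd u₁ u₂ ≠ 0) (x y : ℝ) :
    ((((x:ℂ) + y * I) * v₁ + ((Pp u₁ u₂ v₁ v₂ x y : ℝ) + (Qq u₁ u₂ v₁ v₂ x y : ℝ) * I)) *
      (starRingEnd ℂ) u₁).im = 0 := by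
  simp only [Complex.mul_im, Complex.mul_re, Complex.add_im, Complex.add_re,
    Complex.ofReal_re, Complex.ofReal_im, Complex.I_re, Complex.I_im,
    Complex.conj_re, Complex.conj_im]
  simp only [Pp, Qq, sS, sX, sY, Dd] at *
  linear_combination (-1 : ℝ) * (-x * v₁.re * u₁.im + x * v₁.im * u₁.re + y * v₁.re * u₁.re + y * v₁.im * u₁.im) * mul_inv_cancel₀ hD

private lemma aux2 (u₁ u₂ v₁ v₂ : ℂ) (hD : Dd u₁ u₂ ≠ 0) (x y : ℝ) :
    ((((x:ℂ) + y * I) * v₂ + ((Pp u₁ u₂ v₁ v₂ x y : ℝ) + (Qq u₁ u₂ v₁ v₂ x y : ℝ) * I)) *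
      (starRingEnd ℂ) u₂).im = 0 := by
  simp only [Complex.mul_im, Complex.mul_re, Complex.add_im, Complex.add_re,
    Complex.ofReal_re, Complex.ofReal_im, Complex.I_re, Complex.I_im,
    Complex.conj_re, Complex.conj_im]
  simp only [Pp, Qq, sS, sX, sY, Dd] at *
  linear_combination (-1 : ℝ) * (-x * v₂.re * u₂.im + x * v₂.im * u₂.re + y * v₂.re * u₂.re + y * v₂.im * u₂.im) * mul_inv_cancel₀ hD

private lemma aux3 (u₁ u₂ u₃ v₁ v₂ v₃ : ℂ) (hD : Dd u₁ u₂ ≠ 0) (x y : ℝ) :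
    ((((x:ℂ) + y * I) * v₃ + ((Pp u₁ u₂ v₁ v₂ x y : ℝ) + (Qq u₁ u₂ v₁ v₂ x y : ℝ) * I)) *
      (starRingEnd ℂ) u₃).im = Aa u₁ u₂ u₃ v₁ v₂ v₃ * x + Bb u₁ u₂ u₃ v₁ v₂ v₃ * y := by
  simp only [Complex.mul_im, Complex.mul_re, Complex.add_im, Complex.add_re,
    Complex.ofReal_re, Complex.ofReal_im, Complex.I_re, Complex.I_im,
    Complex.conj_re, Complex.conj_im]
  simp only [Pp, Qq, sS, sX, sY, Dd, Aa, Bb] at *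
  field_simp
  ring

private lemma key (u₁ u₂ u₃ v₁ v₂ v₃ : ℂ) (hD : Dd u₁ u₂ ≠ 0) :
    ∃ w b : ℂ, ‖w‖ = 1 ∧
      ((w * v₁ + b) * (starRingEnd ℂ) u₁).im = 0 ∧
      ((w * v₂ + b) * (starRingEnd ℂ) u₂).im = 0 ∧
      ((w * v₃ + b) * (starRingEnd ℂ) u₃).im = 0 := by
  by_cases hAB : Aa u₁ u₂ u₃ v₁ v₂ v₃ = 0 ∧ Bb u₁ u₂ u₃ v₁ v₂ v₃ = 0
  · refine ⟨((1:ℝ):ℂ) + (0:ℝ) * I,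
      ((Pp u₁ u₂ v₁ v₂ 1 0 : ℝ) : ℂ) + (Qq u₁ u₂ v₁ v₂ 1 0 : ℝ) * I,
      by simp, aux1 u₁ u₂ v₁ v₂ hD 1 0, aux2 u₁ u₂ v₁ v₂ hD 1 0, ?_⟩
    rw [aux3 u₁ u₂ u₃ v₁ v₂ v₃ hD 1 0, hAB.1, hAB.2]
    ring
  · set A := Aa u₁ u₂ u₃ v₁ v₂ v₃ with hA
    set B := Bb u₁ u₂ u₃ v₁ v₂ v₃ with hB
    have hABpos : 0 < A ^ 2 + B ^ 2 := by
      rcases not_and_or.1 hAB with h | h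
      · have : 0 < A ^ 2 := by positivity
        nlinarith [sq_nonneg B]
      · have : 0 < B ^ 2 := by positivity
        nlinarith [sq_nonneg A]
    set r := Real.sqrt (A ^ 2 + B ^ 2) with hrdef
    have hr : 0 < r := Real.sqrt_pos.2 hABpos
    have hr2 : r ^ 2 = A ^ 2 + B ^ 2 := Real.sq_sqrt hABpos.le
    refine ⟨((-B / r : ℝ) : ℂ) + (A / r : ℝ) * I,
      ((Pp u₁ u₂ v₁ v₂ (-B / r) (A / r) : ℝ) : ℂ) + (Qq u₁ u₂ v₁ v₂ (-B / r) (A / r) : ℝ) * I,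
      ?_, aux1 u₁ u₂ v₁ v₂ hD _ _, aux2 u₁ u₂ v₁ v₂ hD _ _, ?_⟩
    · rw [Complex.norm_def]
      have hns : Complex.normSq (((-B / r : ℝ) : ℂ) + (A / r : ℝ) * I) = 1 := by
        simp only [Complex.normSq_apply, Complex.add_re, Complex.add_im, Complex.mul_re,
          Complex.mul_im, Complex.ofReal_re, Complex.ofReal_im, Complex.I_re, Complex.I_im]
        field_simp
        linarith [hr2]
      rw [hns, Real.sqrt_one]
    · rw [aux3 u₁ u₂ u₃ v₁ v₂ v₃ hD _ _]
      field_simp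
      ring

private lemma existsGen (L : Submodule ℝ ℂ) (h : Module.finrank ℝ L = 1) :
    ∃ u : ℂ, u ≠ 0 ∧ L = Submodule.span ℝ {u} := by
  have hbot : L ≠ ⊥ := by
    intro hb
    rw [hb] at h
    simp at h
  obtain ⟨u, huL, hu⟩ := Submodule.exists_mem_ne_zero_of_ne_bot hbot
  refine ⟨u, hu, ?_⟩
  have hle : Submodule.span ℝ {u} ≤ L := Submodule.span_le.2 (by simpa using huL)
  exact (Submodule.eq_of_le_of_finrank_le hle
    (by rw [h, finrank_span_singleton hu])).symm

private lemma Dne (u₁ u₂ : ℂ) (h1 : u₁ ≠ 0) (h2 : u₂ ≠ 0)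
    (hs : Submodule.span ℝ {u₁} ≠ Submodule.span ℝ ({u₂} : Set ℂ)) : Dd u₁ u₂ ≠ 0 := by
  intro hd
  apply hs
  have hm1 : u₁ ∈ Submodule.span ℝ ({u₂} : Set ℂ) := by
    rw [memSpanIff u₂ h2]
    simp only [Complex.mul_im, Complex.conj_re, Complex.conj_im]
    simp only [Dd] at hd
    linarith
  have hm2 : u₂ ∈ Submodule.span ℝ ({u₁} : Set ℂ) := by
    rw [memSpanIff u₁ h1]
    simp only [Complex.mul_im, Complex.conj_re, Complex.conj_im]
    simp only [Dd] at hd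
    linarith
  exact le_antisymm (Submodule.span_le.2 (by simpa using hm1))
    (Submodule.span_le.2 (by simpa using hm2))

end Stmt3Aux

/-- If the three lines through the origin in `ℝ²` do not all coincide, then every
triple of points can be moved by a rigid motion so that the `j`-th point lands on
the line `ℓⱼ`. -/
theorem stmt3 (ℓ₁ ℓ₂ ℓ₃ : Submodule ℝ (EuclideanSpace ℝ (Fin 2)))
    (h₁ : Module.finrank ℝ ℓ₁ = 1) (h₂ : Module.finrank ℝ ℓ₂ = 1)
    (h₃ : Module.finrank ℝ ℓ₃ = 1)
    (hne : ¬ (ℓ₁ = ℓ₂ ∧ ℓ₂ = ℓ₃)) :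
    ∀ z₁ z₂ z₃ : EuclideanSpace ℝ (Fin 2),
      ∃ g : EuclideanSpace ℝ (Fin 2) ≃ᵢ EuclideanSpace ℝ (Fin 2),
        g z₁ ∈ ℓ₁ ∧ g z₂ ∈ ℓ₂ ∧ g z₃ ∈ ℓ₃ := by
  intro z₁ z₂ z₃
  set e := Complex.orthonormalBasisOneI.repr with he
  set F := e.symm.toLinearEquiv with hF
  set L₁ := Submodule.map (F : EuclideanSpace ℝ (Fin 2) →ₗ[ℝ] ℂ) ℓ₁ with hL₁
  set L₂ := Submodule.map (F : EuclideanSpace ℝ (Fin 2) →ₗ[ℝ] ℂ) ℓ₂ with hL₂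
  set L₃ := Submodule.map (F : EuclideanSpace ℝ (Fin 2) →ₗ[ℝ] ℂ) ℓ₃ with hL₃
  have hmem : ∀ (ℓ : Submodule ℝ (EuclideanSpace ℝ (Fin 2))) (c : ℂ),
      c ∈ Submodule.map (F : EuclideanSpace ℝ (Fin 2) →ₗ[ℝ] ℂ) ℓ ↔ e c ∈ ℓ := by
    intro ℓ c
    simp only [Submodule.mem_map]
    constructor
    · rintro ⟨x, hx, hxc⟩
      have : e c = x := by
        rw [← hxc]
        simp [hF]
      rwa [this]
    · intro hc
      exact ⟨e c, hc, by simp [hF]⟩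
  have hrk : ∀ ℓ : Submodule ℝ (EuclideanSpace ℝ (Fin 2)),
      Module.finrank ℝ (Submodule.map (F : EuclideanSpace ℝ (Fin 2) →ₗ[ℝ] ℂ) ℓ) = Module.finrank ℝ ℓ :=
    fun ℓ => LinearEquiv.finrank_map_eq F ℓ
  obtain ⟨u₁, hu₁, hgen₁⟩ := existsGen L₁ (by rw [hrk]; exact h₁)
  obtain ⟨u₂, hu₂, hgen₂⟩ := existsGen L₂ (by rw [hrk]; exact h₂)
  obtain ⟨u₃, hu₃, hgen₃⟩ := existsGen L₃ (by rw [hrk]; exact h₃)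
  set v₁ := e.symm z₁
  set v₂ := e.symm z₂
  set v₃ := e.symm z₃
  have hmapinj : Function.Injective (Submodule.map (F : EuclideanSpace ℝ (Fin 2) →ₗ[ℝ] ℂ) :
      Submodule ℝ (EuclideanSpace ℝ (Fin 2)) → Submodule ℝ ℂ) :=
    Submodule.map_injective_of_injective F.injective
  -- get w, b
  have hwb : ∃ w b : ℂ, ‖w‖ = 1 ∧
      ((w * v₁ + b) * (starRingEnd ℂ) u₁).im = 0 ∧
      ((w * v₂ + b) * (starRingEnd ℂ) u₂).im = 0 ∧
      ((w * v₃ + b) * (starRingEnd ℂ) u₃).im = 0 := by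
    rw [not_and_or] at hne
    rcases hne with h12 | h23
    · have hL : L₁ ≠ L₂ := fun h => h12 (hmapinj h)
      have hD : Dd u₁ u₂ ≠ 0 := by
        apply Dne u₁ u₂ hu₁ hu₂
        rw [← hgen₁, ← hgen₂]
        exact hL
      exact key u₁ u₂ u₃ v₁ v₂ v₃ hD
    · have hL : L₂ ≠ L₃ := fun h => h23 (hmapinj h)
      have hD : Dd u₂ u₃ ≠ 0 := by
        apply Dne u₂ u₃ hu₂ hu₃
        rw [← hgen₂, ← hgen₃]
        exact hL
      obtain ⟨w, b, hw, e2, e3, e1⟩ := key u₂ u₃ u₁ v₂ v₃ v₁ hD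
      exact ⟨w, b, hw, e1, e2, e3⟩
  obtain ⟨w, b, hw, e1, e2, e3⟩ := hwb
  have hwmem : w ∈ Metric.sphere (0 : ℂ) 1 := by
    rw [mem_sphere_zero_iff_norm]
    exact hw
  set c : Circle := ⟨w, hwmem⟩ with hc
  set h : ℂ ≃ᵢ ℂ := (rotation c).toIsometryEquiv.trans (IsometryEquiv.addRight b) with hh
  refine ⟨(e.symm.toIsometryEquiv).trans (h.trans e.toIsometryEquiv), ?_, ?_, ?_⟩
  · have : h v₁ ∈ L₁ := by
      rw [hgen₁, memSpanIff u₁ hu₁]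
      have : h v₁ = w * v₁ + b := by
        simp [hh, hc, rotation_apply]
        exact rotation_apply _ _
      rw [this]
      exact e1
    simpa using (hmem ℓ₁ (h v₁)).1 this
  · have : h v₂ ∈ L₂ := by
      rw [hgen₂, memSpanIff u₂ hu₂]
      have : h v₂ = w * v₂ + b := by
        simp [hh, hc, rotation_apply]
        exact rotation_apply _ _
      rw [this]
      exact e2
    simpa using (hmem ℓ₂ (h v₂)).1 this
  · have : h v₃ ∈ L₃ := by
      rw [hgen₃, memSpanIff u₃ hu₃]
      have : h v₃ = w * v₃ + b := by
        simp [hh, hc, rotation_apply]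
        exact rotation_apply _ _
      rw [this]
      exact e3
    simpa using (hmem ℓ₃ (h v₃)).1 this
end

section
/- Let $q_1, q_2, q_3$ be pairwise distinct unit vectors in $\mathbb{R}^n$ ($n \ge 2$) and let $\mathfrak{p}_i \subset \mathfrak{so}(n,1)$ be the stabilizer of the isotropic line $\mathbb{R}(q_i, 1)$ for $i=1,2,3$. Then $\dim(\mathfrak{p}_1 \cap \mathfrak{p}_2 \cap \mathfrak{p}_3) = \tfrac12(n^2 - 5n + 6)$. -/
open Matrix

/-- The minimal parabolic subalgebra of `𝔰𝔬(n,1)`, realized as the space of pairs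
`(A, b)` with `A` antisymmetric and `A q + b = (b ⬝ᵥ q) q`, sitting inside
`Matrix (Fin n) (Fin n) ℝ × (Fin n → ℝ)`. -/
def parabolic (n : ℕ) (q : Fin n → ℝ) :
    Submodule ℝ (Matrix (Fin n) (Fin n) ℝ × (Fin n → ℝ)) where
  carrier := {p | p.1ᵀ = -p.1 ∧ p.1.mulVec q + p.2 = (p.2 ⬝ᵥ q) • q}
  zero_mem' := by simp
  add_mem' := by
    rintro ⟨A, b⟩ ⟨A', b'⟩ ⟨h1, h2⟩ ⟨h1', h2'⟩
    refine ⟨by simp only [Prod.fst_add, Matrix.transpose_add, h1, h1', neg_add], ?_⟩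
    simp only [Prod.fst_add, Prod.snd_add, Matrix.add_mulVec, add_dotProduct, add_smul,
      ← h2, ← h2']
    abel
  smul_mem' := by
    rintro c ⟨A, b⟩ ⟨h1, h2⟩
    refine ⟨by simp [Matrix.transpose_smul, h1], ?_⟩
    simp only [Prod.smul_fst, Prod.smul_snd, Matrix.smul_mulVec, smul_dotProduct,
      smul_smul, ← smul_add, h2]
    simp [smul_eq_mul]

private lemma card_ltPairs (m : ℕ) :
    2 * Fintype.card {p : Fin m × Fin m // p.1 < p.2} + m = m * m := by
  have e := Equiv.subtypeProdEquivSigmaSubtype (fun (i j : Fin m) => i < j)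
  have h1 : Fintype.card {p : Fin m × Fin m // p.1 < p.2}
      = ∑ i : Fin m, (m - 1 - (i : ℕ)) := by
    rw [Fintype.card_congr e, Fintype.card_sigma]
    congr 1; funext i
    rw [Fintype.card_congr (Equiv.subtypeEquivRight (fun j => by
      simp [Set.mem_Ioi] : ∀ j : Fin m, i < j ↔ j ∈ Set.Ioi i)), Fintype.card_Ioi, Fin.card_Ioi]
  have h2 : ∑ i : Fin m, (m - 1 - (i : ℕ)) = ∑ i ∈ Finset.range m, (m - 1 - i) :=
    Fin.sum_univ_eq_sum_range _ m
  have h3 : ∑ i ∈ Finset.range m, (m - 1 - i) = ∑ i ∈ Finset.range m, i := by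
    rw [← Finset.sum_range_reflect]
    refine Finset.sum_congr rfl fun i hi => ?_
    have := Finset.mem_range.mp hi
    omega
  have h4 := Finset.sum_range_id_mul_two m
  have h6 : m * m = m * (m - 1) + m := by
    cases m with
    | zero => simp
    | succ k => simp [Nat.succ_sub_one]; ring
  omega

/-- Skew matrices annihilating two vectors. -/
private def skewAnn (n : ℕ) (u v : Fin n → ℝ) : Submodule ℝ (Matrix (Fin n) (Fin n) ℝ) where
  carrier := {A | Aᵀ = -A ∧ A.mulVec u = 0 ∧ A.mulVec v = 0}
  zero_mem' := by simp
  add_mem' := by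
    rintro A B ⟨hA1, hA2, hA3⟩ ⟨hB1, hB2, hB3⟩
    refine ⟨by rw [transpose_add, hA1, hB1, neg_add], ?_, ?_⟩ <;>
      simp [Matrix.add_mulVec, hA2, hA3, hB2, hB3]
  smul_mem' := by
    rintro c A ⟨hA1, hA2, hA3⟩
    refine ⟨by rw [transpose_smul, hA1, smul_neg], ?_, ?_⟩ <;>
      simp [Matrix.smul_mulVec, hA2, hA3]

private lemma mem_skewAnn {n : ℕ} {u v : Fin n → ℝ} {A : Matrix (Fin n) (Fin n) ℝ} :
    A ∈ skewAnn n u v ↔ Aᵀ = -A ∧ A.mulVec u = 0 ∧ A.mulVec v = 0 := Iff.rfl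

/-- extend coefficients on strictly-upper-triangular positions to a skew matrix -/
private def skewLift (m : ℕ) :
    ({p : Fin m × Fin m // p.1 < p.2} → ℝ) →ₗ[ℝ] Matrix (Fin m) (Fin m) ℝ where
  toFun c := Matrix.of fun i j =>
    if h : i < j then c ⟨(i, j), h⟩ else if h' : j < i then -c ⟨(j, i), h'⟩ else 0
  map_add' c c' := by
    ext i j
    simp only [Matrix.of_apply, Matrix.add_apply, Pi.add_apply]
    split_ifs <;> ring
  map_smul' r c := by
    ext i j
    simp only [Matrix.of_apply, Matrix.smul_apply, Pi.smul_apply, smul_eq_mul, RingHom.id_apply]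
    split_ifs <;> ring

private lemma skew_pairing {n : ℕ} {A : Matrix (Fin n) (Fin n) ℝ} (hA : Aᵀ = -A)
    (x y : Fin n → ℝ) : y ⬝ᵥ A.mulVec x = -(x ⬝ᵥ A.mulVec y) := by
  have h1 : y ᵥ* A = -(A *ᵥ y) := by
    conv_lhs => rw [← transpose_transpose A, hA]
    rw [transpose_neg, Matrix.vecMul_neg, vecMul_transpose]
  rw [dotProduct_mulVec, h1, neg_dotProduct, dotProduct_comm]

private lemma matrix_eq_of_mulVec {n m : ℕ} {A B : Matrix (Fin n) (Fin m) ℝ}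
    (h : ∀ x, A.mulVec x = B.mulVec x) : A = B := by
  have : Matrix.toLin' A = Matrix.toLin' B := LinearMap.ext fun x => by
    simpa [Matrix.toLin'_apply] using h x
  exact Matrix.toLin'.injective this

private lemma finrank_skewAnn {n : ℕ} (u v : Fin n → ℝ) (m : ℕ)
    (hm : Module.finrank ℝ ((Fin n → ℝ) ⧸ Submodule.span ℝ ({u, v} : Set (Fin n → ℝ))) = m) :
    Module.finrank ℝ (skewAnn n u v)
      = Fintype.card {p : Fin m × Fin m // p.1 < p.2} := by
  classical
  set W := Submodule.span ℝ ({u, v} : Set (Fin n → ℝ)) with hW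
  have hu : u ∈ W := Submodule.subset_span (by simp)
  have hv : v ∈ W := Submodule.subset_span (by simp)
  let c : Module.Basis (Fin m) ℝ ((Fin n → ℝ) ⧸ W) := Module.finBasisOfFinrankEq ℝ _ hm
  let r : (Fin n → ℝ) →ₗ[ℝ] (Fin m → ℝ) := c.equivFun.toLinearMap ∘ₗ W.mkQ
  let C : Matrix (Fin m) (Fin n) ℝ := LinearMap.toMatrix' r
  have hC : ∀ x, C.mulVec x = r x := fun x => by
    rw [← Matrix.toLin'_apply, Matrix.toLin'_toMatrix']
  choose d hd using fun i => W.mkQ_surjective (c i)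
  let D : Matrix (Fin m) (Fin n) ℝ := Matrix.of fun i k => d i k
  have hDmul : ∀ (y : Fin n → ℝ) i, D.mulVec y i = d i ⬝ᵥ y := fun y i => rfl
  have hrd : ∀ i, r (d i) = Pi.single i 1 := by
    intro i
    funext j
    simp only [r, LinearMap.comp_apply, Submodule.mkQ_apply, LinearEquiv.coe_coe]
    rw [show (Submodule.Quotient.mk (d i) : (Fin n → ℝ) ⧸ W) = c i from hd i]
    rw [Module.Basis.equivFun_self, Pi.single_apply]
    simp [eq_comm]
  -- kill lemma
  have hkill : ∀ A ∈ skewAnn n u v, ∀ w ∈ W, A.mulVec w = 0 := by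
    rintro A ⟨hA1, hA2, hA3⟩ w hw
    obtain ⟨a, b, rfl⟩ := Submodule.mem_span_pair.mp hw
    simp [Matrix.mulVec_add, Matrix.mulVec_smul, hA2, hA3]
  -- projection lemma : (Dᵀ * C) x - x ∈ W
  have hDt : ∀ w : Fin m → ℝ, Dᵀ.mulVec w = ∑ i, w i • d i := by
    intro w
    funext k
    simp only [Matrix.mulVec, dotProduct, Matrix.transpose_apply, Finset.sum_apply,
      Pi.smul_apply, smul_eq_mul, D, Matrix.of_apply]
    exact Finset.sum_congr rfl fun i _ => mul_comm _ _
  have hP : ∀ x : Fin n → ℝ, (Dᵀ * C).mulVec x - x ∈ W := by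
    intro x
    rw [← Submodule.Quotient.mk_eq_zero W]
    have h1 : (Dᵀ * C).mulVec x = ∑ i, r x i • d i := by
      rw [← Matrix.mulVec_mulVec, hC, hDt]
    have h2 : W.mkQ ((Dᵀ * C).mulVec x) = W.mkQ x := by
      rw [h1, map_sum]
      simp only [_root_.map_smul, hd]
      have : W.mkQ x = Submodule.Quotient.mk x := rfl
      calc ∑ i, r x i • c i = ∑ i, c.equivFun (W.mkQ x) i • c i := rfl
        _ = W.mkQ x := c.sum_equivFun (W.mkQ x)
    calc (Submodule.Quotient.mk ((Dᵀ * C).mulVec x - x) : (Fin n → ℝ) ⧸ W)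
        = W.mkQ ((Dᵀ * C).mulVec x) - W.mkQ x := by
          rw [show (Submodule.Quotient.mk ((Dᵀ * C).mulVec x - x) : (Fin n → ℝ) ⧸ W)
            = W.mkQ ((Dᵀ * C).mulVec x - x) from rfl, map_sub]
      _ = 0 := by rw [h2, sub_self]
  -- `r` kills `W`
  have hrW : ∀ w ∈ W, r w = 0 := by
    intro w hw
    have : W.mkQ w = 0 := (Submodule.Quotient.mk_eq_zero W).mpr hw
    simp only [r, LinearMap.comp_apply, this, map_zero]
  -- the forward map
  let f : (skewAnn n u v) →ₗ[ℝ] ({p : Fin m × Fin m // p.1 < p.2} → ℝ) :=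
    { toFun := fun A p => d p.1.1 ⬝ᵥ (A : Matrix (Fin n) (Fin n) ℝ).mulVec (d p.1.2)
      map_add' := fun A B => by
        funext p
        simp [Matrix.add_mulVec, dotProduct_add]
      map_smul' := fun t A => by
        funext p
        simp [Matrix.smul_mulVec, dotProduct_smul] }
  -- backward map, into matrices
  have hmemg : ∀ cM, Cᵀ * skewLift m cM * C ∈ skewAnn n u v := by
    intro cM
    set M := skewLift m cM with hM
    have hsk : Mᵀ = -M := by
      ext i j
      simp only [Matrix.transpose_apply, Matrix.neg_apply, hM, skewLift, LinearMap.coe_mk,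
        AddHom.coe_mk, Matrix.of_apply]
      rcases lt_trichotomy i j with h | h | h
      · rw [dif_neg (asymm h), dif_pos h, dif_pos h]
      · subst h
        rw [dif_neg (lt_irrefl i), dif_neg (lt_irrefl i), neg_zero]
      · rw [dif_pos h, dif_neg (asymm h), dif_pos h, neg_neg]
    refine ⟨?_, ?_, ?_⟩
    · simp only [Matrix.transpose_mul, Matrix.transpose_transpose, hsk]
      simp only [Matrix.neg_mul, Matrix.mul_neg, Matrix.mul_assoc]
    · rw [← Matrix.mulVec_mulVec, ← Matrix.mulVec_mulVec, hC, hrW u hu,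
        Matrix.mulVec_zero, Matrix.mulVec_zero]
    · rw [← Matrix.mulVec_mulVec, ← Matrix.mulVec_mulVec, hC, hrW v hv,
        Matrix.mulVec_zero, Matrix.mulVec_zero]
  let g : ({p : Fin m × Fin m // p.1 < p.2} → ℝ) →ₗ[ℝ] (skewAnn n u v) :=
    { toFun := fun cM => ⟨Cᵀ * skewLift m cM * C, hmemg cM⟩
      map_add' := fun cM cM' => by
        apply Subtype.ext
        simp [map_add, Matrix.mul_add, Matrix.add_mul]
      map_smul' := fun t cM => by
        apply Subtype.ext
        simp [_root_.map_smul, Matrix.mul_smul, Matrix.smul_mul] }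
  -- f ∘ g = id
  have hfg : f.comp g = LinearMap.id := by
    apply LinearMap.ext
    intro cM
    funext p
    obtain ⟨⟨i, j⟩, hij⟩ := p
    show d i ⬝ᵥ (Cᵀ * skewLift m cM * C).mulVec (d j) = cM ⟨(i, j), hij⟩
    rw [← Matrix.mulVec_mulVec, ← Matrix.mulVec_mulVec, hC, hrd j,
      Matrix.mulVec_single_one, Matrix.mulVec_transpose]
    rw [dotProduct_comm, ← dotProduct_mulVec, hC, hrd i, dotProduct_single]
    show (skewLift m cM) i j * 1 = cM ⟨(i, j), hij⟩
    rw [mul_one]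
    exact dif_pos hij
  -- g ∘ f = id
  have hgf : g.comp f = LinearMap.id := by
    apply LinearMap.ext
    rintro ⟨A, hA1, hA2, hA3⟩
    apply Subtype.ext
    show Cᵀ * skewLift m (f ⟨A, hA1, hA2, hA3⟩) * C = A
    have hAW : ∀ w ∈ W, A.mulVec w = 0 := hkill A ⟨hA1, hA2, hA3⟩
    have hprod : ∀ i j, (D * A * Dᵀ) i j = d i ⬝ᵥ A.mulVec (d j) := by
      intro i j
      simp only [Matrix.mul_apply, Matrix.mulVec, dotProduct, Matrix.transpose_apply,
        Finset.sum_mul, Finset.mul_sum, Matrix.of_apply, D]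
      rw [Finset.sum_comm]
      exact Finset.sum_congr rfl fun l _ => Finset.sum_congr rfl fun k _ => by ring
    have hN : skewLift m (f ⟨A, hA1, hA2, hA3⟩) = D * A * Dᵀ := by
      ext i j
      rw [hprod i j]
      show (if h : i < j then d i ⬝ᵥ A.mulVec (d j)
        else if h' : j < i then -(d j ⬝ᵥ A.mulVec (d i)) else 0) = d i ⬝ᵥ A.mulVec (d j)
      rcases lt_trichotomy i j with h | h | h
      · rw [dif_pos h]
      · subst h
        rw [dif_neg (lt_irrefl i), dif_neg (lt_irrefl i)]
        have := skew_pairing hA1 (d i) (d i)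
        linarith
      · rw [dif_neg (asymm h), dif_pos h, skew_pairing hA1 (d i) (d j), neg_neg]
    have c1 : A * (Dᵀ * C) = A := by
      apply matrix_eq_of_mulVec
      intro x
      rw [← Matrix.mulVec_mulVec]
      have h0 : A.mulVec ((Dᵀ * C).mulVec x - x) = 0 := hAW _ (hP x)
      rw [Matrix.mulVec_sub] at h0
      exact sub_eq_zero.mp h0
    have c2 : (Dᵀ * C)ᵀ * A = A := by
      have h3 : Aᵀ * (Dᵀ * C) = -A := by rw [hA1, Matrix.neg_mul, c1]
      calc (Dᵀ * C)ᵀ * A = (Dᵀ * C)ᵀ * (Aᵀ)ᵀ := by rw [Matrix.transpose_transpose]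
        _ = (Aᵀ * (Dᵀ * C))ᵀ := by rw [Matrix.transpose_mul Aᵀ (Dᵀ * C)]
        _ = (-A)ᵀ := by rw [h3]
        _ = A := by rw [Matrix.transpose_neg, hA1, neg_neg]
    rw [hN]
    calc Cᵀ * (D * A * Dᵀ) * C = (Dᵀ * C)ᵀ * (A * (Dᵀ * C)) := by
          simp only [Matrix.transpose_mul, Matrix.transpose_transpose, Matrix.mul_assoc]
      _ = A := by rw [c1, c2]
  have e : (skewAnn n u v) ≃ₗ[ℝ] ({p : Fin m × Fin m // p.1 < p.2} → ℝ) :=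
    LinearEquiv.ofLinear f g hfg hgf
  rw [e.finrank_eq, Module.finrank_fintype_fun_eq_card]


private lemma dot_ne_one {n : ℕ} {q q' : Fin n → ℝ} (hq : q ⬝ᵥ q = 1) (hq' : q' ⬝ᵥ q' = 1)
    (h : q ≠ q') : q ⬝ᵥ q' ≠ 1 := by
  intro hcon
  have hne : q - q' ≠ 0 := sub_ne_zero.mpr h
  have hz : (q - q') ⬝ᵥ (q - q') ≠ 0 := fun hc => hne (dotProduct_self_eq_zero.mp hc)
  apply hz
  rw [sub_dotProduct, dotProduct_sub, dotProduct_sub, hq, hq', dotProduct_comm q' q, hcon]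
  ring

private def Lmap (n : ℕ) (q : Fin n → ℝ) :
    Matrix (Fin n) (Fin n) ℝ →ₗ[ℝ] Matrix (Fin n) (Fin n) ℝ × (Fin n → ℝ) where
  toFun A := (A, -(A.mulVec q))
  map_add' A B := by
    simp only [Matrix.add_mulVec, neg_add, Prod.mk_add_mk]
  map_smul' t A := by
    simp only [Matrix.smul_mulVec, RingHom.id_apply, Prod.smul_mk, smul_neg]

private lemma Lmap_injective (n : ℕ) (q : Fin n → ℝ) : Function.Injective (Lmap n q) :=
  fun A B h => congrArg Prod.fst h

private lemma inter_eq_map {n : ℕ} (q₁ q₂ q₃ : Fin n → ℝ)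
    (hq₁ : q₁ ⬝ᵥ q₁ = 1) (hq₂ : q₂ ⬝ᵥ q₂ = 1) (hq₃ : q₃ ⬝ᵥ q₃ = 1)
    (h12 : q₁ ≠ q₂) (h13 : q₁ ≠ q₃) (h23 : q₂ ≠ q₃) :
    parabolic n q₁ ⊓ parabolic n q₂ ⊓ parabolic n q₃
      = (skewAnn n (q₁ - q₂) (q₁ - q₃)).map (Lmap n q₁) := by
  apply le_antisymm
  · rintro ⟨A, b⟩ ⟨⟨⟨h1, c1⟩, ⟨-, c2⟩⟩, ⟨-, c3⟩⟩
    have key : ∀ qa qb : Fin n → ℝ, qa ⬝ᵥ qa = 1 → qb ⬝ᵥ qb = 1 → qa ≠ qb →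
        A.mulVec qa + b = (b ⬝ᵥ qa) • qa → A.mulVec qb + b = (b ⬝ᵥ qb) • qb →
        b ⬝ᵥ qa + b ⬝ᵥ qb = 0 := by
      intro qa qb ha hb hab ca cb
      have e1 := congrArg (· ⬝ᵥ qb) ca
      have e2 := congrArg (· ⬝ᵥ qa) cb
      simp only [add_dotProduct, smul_dotProduct, smul_eq_mul] at e1 e2
      have hsp := skew_pairing h1 qa qb
      have hc : qb ⬝ᵥ qa = qa ⬝ᵥ qb := dotProduct_comm _ _
      have e3 : A.mulVec qa ⬝ᵥ qb + A.mulVec qb ⬝ᵥ qa = 0 := by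
        rw [dotProduct_comm (A.mulVec qa) qb, dotProduct_comm (A.mulVec qb) qa]
        linarith
      have hmul : (b ⬝ᵥ qa + b ⬝ᵥ qb) * (qa ⬝ᵥ qb - 1) = 0 := by
        rw [hc] at e2
        linear_combination e3 - e1 - e2
      rcases mul_eq_zero.mp hmul with h | h
      · exact h
      · exact absurd (by linarith : qa ⬝ᵥ qb = 1) (dot_ne_one ha hb hab)
    have k12 := key q₁ q₂ hq₁ hq₂ h12 c1 c2
    have k13 := key q₁ q₃ hq₁ hq₃ h13 c1 c3
    have k23 := key q₂ q₃ hq₂ hq₃ h23 c2 c3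
    have z1 : b ⬝ᵥ q₁ = 0 := by linarith
    have z2 : b ⬝ᵥ q₂ = 0 := by linarith
    have z3 : b ⬝ᵥ q₃ = 0 := by linarith
    rw [z1, zero_smul] at c1
    rw [z2, zero_smul] at c2
    rw [z3, zero_smul] at c3
    have hb1 : A.mulVec q₁ = -b := eq_neg_of_add_eq_zero_left c1
    have hb2 : A.mulVec q₂ = -b := eq_neg_of_add_eq_zero_left c2
    have hb3 : A.mulVec q₃ = -b := eq_neg_of_add_eq_zero_left c3
    refine ⟨A, ⟨h1, ?_, ?_⟩, ?_⟩
    · rw [Matrix.mulVec_sub, hb1, hb2, sub_self]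
    · rw [Matrix.mulVec_sub, hb1, hb3, sub_self]
    · show (A, -(A.mulVec q₁)) = (A, b)
      rw [hb1, neg_neg]
  · rintro p ⟨A, ⟨hA1, hA2, hA3⟩, rfl⟩
    have hb2 : A.mulVec q₂ = A.mulVec q₁ := by
      rw [Matrix.mulVec_sub] at hA2
      exact (sub_eq_zero.mp hA2).symm
    have hb3 : A.mulVec q₃ = A.mulVec q₁ := by
      rw [Matrix.mulVec_sub] at hA3
      exact (sub_eq_zero.mp hA3).symm
    have hz : ∀ q : Fin n → ℝ, A.mulVec q = A.mulVec q₁ → -(A.mulVec q₁) ⬝ᵥ q = 0 := by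
      intro q hq
      have hsp := skew_pairing hA1 q q
      rw [neg_dotProduct, dotProduct_comm, ← hq]
      linarith [skew_pairing hA1 q q]
    have hmem : ∀ q : Fin n → ℝ, A.mulVec q = A.mulVec q₁ →
        (A, -(A.mulVec q₁)) ∈ parabolic n q := by
      intro q hq
      refine ⟨hA1, ?_⟩
      show A.mulVec q + -(A.mulVec q₁) = ((-(A.mulVec q₁)) ⬝ᵥ q) • q
      rw [hq, add_neg_cancel, hz q hq, zero_smul]
    exact ⟨⟨hmem q₁ rfl, hmem q₂ hb2⟩, hmem q₃ hb3⟩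

private lemma li_pair {n : ℕ} (q₁ q₂ q₃ : Fin n → ℝ)
    (hq₁ : q₁ ⬝ᵥ q₁ = 1) (hq₂ : q₂ ⬝ᵥ q₂ = 1) (hq₃ : q₃ ⬝ᵥ q₃ = 1)
    (h12 : q₁ ≠ q₂) (h13 : q₁ ≠ q₃) (h23 : q₂ ≠ q₃) :
    LinearIndependent ℝ ![q₁ - q₂, q₁ - q₃] := by
  rw [LinearIndependent.pair_iff]
  intro s t hst
  have E : ∀ w, (s • (q₁ - q₂) + t • (q₁ - q₃)) ⬝ᵥ w = 0 := fun w => by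
    rw [hst, zero_dotProduct]
  have e1 := E q₁
  have e2 := E q₂
  have e3 := E q₃
  simp only [add_dotProduct, smul_dotProduct, sub_dotProduct, smul_eq_mul, hq₁, hq₂, hq₃,
    dotProduct_comm q₂ q₁, dotProduct_comm q₃ q₁, dotProduct_comm q₃ q₂] at e1 e2 e3
  have ha := dot_ne_one hq₁ hq₂ h12
  have hb := dot_ne_one hq₁ hq₃ h13
  have hc := dot_ne_one hq₂ hq₃ h23
  set a := q₁ ⬝ᵥ q₂
  set b' := q₁ ⬝ᵥ q₃
  set c := q₂ ⬝ᵥ q₃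
  -- e1 : s * (1 - a) + t * (1 - b') = 0 (shape may differ)
  have tα : t * (1 + a - b' - c) = 0 := by linarith
  have sβ : s * (1 + b' - a - c) = 0 := by linarith
  rcases eq_or_ne (1 + a - b' - c) 0 with h0 | h0
  · have hβ : 1 + b' - a - c ≠ 0 := by
      intro h1
      apply hc
      linarith
    have hs : s = 0 := by
      rcases mul_eq_zero.mp sβ with h | h
      · exact h
      · exact absurd h hβ
    refine ⟨hs, ?_⟩
    rw [hs] at e1
    rcases mul_eq_zero.mp (by linarith : t * (1 - b') = 0) with h | h
    · exact h
    · exact absurd (by linarith : b' = 1) hb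
  · have ht : t = 0 := by
      rcases mul_eq_zero.mp tα with h | h
      · exact h
      · exact absurd h h0
    refine ⟨?_, ht⟩
    rw [ht] at e1
    rcases mul_eq_zero.mp (by linarith : s * (1 - a) = 0) with h | h
    · exact h
    · exact absurd (by linarith : a = 1) ha

private lemma finrank_quot {n : ℕ} (hn : 2 ≤ n) {u v : Fin n → ℝ}
    (hli : LinearIndependent ℝ ![u, v]) :
    Module.finrank ℝ ((Fin n → ℝ) ⧸ Submodule.span ℝ ({u, v} : Set (Fin n → ℝ))) = n - 2 := by
  have hrange : Set.range ![u, v] = ({u, v} : Set (Fin n → ℝ)) := by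
    simp [Matrix.range_cons, Matrix.range_cons_empty, Set.pair_comm v u]
  have hW : Module.finrank ℝ (Submodule.span ℝ ({u, v} : Set (Fin n → ℝ))) = 2 := by
    rw [← hrange, finrank_span_eq_card hli, Fintype.card_fin]
  have hsum := Submodule.finrank_quotient_add_finrank
    (Submodule.span ℝ ({u, v} : Set (Fin n → ℝ)))
  have hV : Module.finrank ℝ (Fin n → ℝ) = n := by
    rw [Module.finrank_fintype_fun_eq_card, Fintype.card_fin]
  omega

/-- For pairwise distinct unit vectors `q₁, q₂, q₃` in `ℝⁿ` (`n ≥ 2`), the triple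
intersection of the corresponding minimal parabolic subalgebras of `𝔰𝔬(n,1)` has
dimension `(n² - 5n + 6)/2`. -/
theorem stmt9 {n : ℕ} (hn : 2 ≤ n) (q₁ q₂ q₃ : Fin n → ℝ)
    (hq₁ : q₁ ⬝ᵥ q₁ = 1) (hq₂ : q₂ ⬝ᵥ q₂ = 1) (hq₃ : q₃ ⬝ᵥ q₃ = 1)
    (h12 : q₁ ≠ q₂) (h13 : q₁ ≠ q₃) (h23 : q₂ ≠ q₃) :
    2 * Module.finrank ℝ ↥(parabolic n q₁ ⊓ parabolic n q₂ ⊓ parabolic n q₃) + 5 * n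
      = n ^ 2 + 6 := by
  have hli := li_pair q₁ q₂ q₃ hq₁ hq₂ hq₃ h12 h13 h23
  have hq := finrank_quot hn hli
  have hmap := inter_eq_map q₁ q₂ q₃ hq₁ hq₂ hq₃ h12 h13 h23
  have hfr : Module.finrank ℝ ↥(parabolic n q₁ ⊓ parabolic n q₂ ⊓ parabolic n q₃)
      = Module.finrank ℝ ↥(skewAnn n (q₁ - q₂) (q₁ - q₃)) := by
    rw [hmap]
    exact (Submodule.equivMapOfInjective _ (Lmap_injective n q₁) _).finrank_eq.symm
  obtain ⟨m, rfl⟩ : ∃ m, n = m + 2 := ⟨n - 2, by omega⟩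
  rw [Nat.add_sub_cancel] at hq
  rw [hfr, finrank_skewAnn _ _ m hq]
  have hc := card_ltPairs m
  have h4 : (m + 2) ^ 2 = m * m + 4 * m + 4 := by ring
  obtain ⟨K, hK⟩ : ∃ K, m * m = K := ⟨_, rfl⟩
  rw [hK] at hc h4
  omega
end

section
/- Let $q_1, q_2, q_3$ be pairwise distinct unit vectors in $\mathbb{R}^n$ that are linearly dependent, and let $X = \begin{pmatrix} A & b \\ b^t & 0 \end{pmatrix} \in \mathfrak{so}(n,1)$ satisfy $Aq_i + b = (b\cdot q_i)q_i$ for $i = 1, 2, 3$. Then $b = 0$. -/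
open Matrix

private lemma skew_pair {n : ℕ} (A : Matrix (Fin n) (Fin n) ℝ) (hA : Aᵀ = -A)
    (x y : Fin n → ℝ) : x ⬝ᵥ A.mulVec y = -(y ⬝ᵥ A.mulVec x) := by
  rw [Matrix.dotProduct_mulVec, ← Matrix.mulVec_transpose, hA, Matrix.neg_mulVec,
    neg_dotProduct, dotProduct_comm]

/-- If `q₁, q₂, q₃` are pairwise distinct unit vectors which are linearly dependent,
`A` is antisymmetric and `Aqᵢ + b = (b·qᵢ)qᵢ` for `i = 1, 2, 3`, then `b = 0`. -/
theorem stmt11 {n : ℕ} (q₁ q₂ q₃ : Fin n → ℝ)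
    (hq₁ : q₁ ⬝ᵥ q₁ = 1) (hq₂ : q₂ ⬝ᵥ q₂ = 1) (hq₃ : q₃ ⬝ᵥ q₃ = 1)
    (h12 : q₁ ≠ q₂) (h13 : q₁ ≠ q₃) (h23 : q₂ ≠ q₃)
    (hdep : ¬ LinearIndependent ℝ ![q₁, q₂, q₃])
    (A : Matrix (Fin n) (Fin n) ℝ) (hA : Aᵀ = -A) (b : Fin n → ℝ)
    (h1 : A.mulVec q₁ + b = (b ⬝ᵥ q₁) • q₁)
    (h2 : A.mulVec q₂ + b = (b ⬝ᵥ q₂) • q₂)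
    (h3 : A.mulVec q₃ + b = (b ⬝ᵥ q₃) • q₃) :
    b = 0 := by
  -- inner products
  set s12 := q₁ ⬝ᵥ q₂ with hs12
  set s13 := q₁ ⬝ᵥ q₃ with hs13
  set s23 := q₂ ⬝ᵥ q₃ with hs23
  -- sᵢⱼ < 1
  have hlt : ∀ u v : Fin n → ℝ, u ⬝ᵥ u = 1 → v ⬝ᵥ v = 1 → u ≠ v → u ⬝ᵥ v < 1 := by
    intro u v hu hv huv
    have hpos : 0 < (u - v) ⬝ᵥ (u - v) := by
      have hnn : 0 ≤ (u - v) ⬝ᵥ (u - v) := Finset.sum_nonneg fun i _ => mul_self_nonneg _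
      rcases lt_or_eq_of_le hnn with h | h
      · exact h
      · exact absurd (sub_eq_zero.mp ((dotProduct_self_eq_zero).mp h.symm)) huv
    have hexp : (u - v) ⬝ᵥ (u - v) = 2 - 2 * (u ⬝ᵥ v) := by
      rw [sub_dotProduct, dotProduct_sub, dotProduct_sub,
        hu, hv, dotProduct_comm v u]
      ring
    rw [hexp] at hpos; linarith
  have hl12 : s12 < 1 := hlt q₁ q₂ hq₁ hq₂ h12
  have hl13 : s13 < 1 := hlt q₁ q₃ hq₁ hq₃ h13
  have hl23 : s23 < 1 := hlt q₂ q₃ hq₂ hq₃ h23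
  -- pairwise: (b·qᵢ + b·qⱼ)(1 - sᵢⱼ) = 0
  have key : ∀ u v : Fin n → ℝ,
      A.mulVec u + b = (b ⬝ᵥ u) • u → A.mulVec v + b = (b ⬝ᵥ v) • v →
      (b ⬝ᵥ u + b ⬝ᵥ v) * (1 - u ⬝ᵥ v) = 0 := by
    intro u v hu hv
    have e1 : v ⬝ᵥ (A.mulVec u + b) = v ⬝ᵥ ((b ⬝ᵥ u) • u) := by rw [hu]
    have e2 : u ⬝ᵥ (A.mulVec v + b) = u ⬝ᵥ ((b ⬝ᵥ v) • v) := by rw [hv]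
    rw [dotProduct_add, dotProduct_smul] at e1 e2
    have hsk := skew_pair A hA v u
    have hcv : v ⬝ᵥ b = b ⬝ᵥ v := dotProduct_comm v b
    have hcu : u ⬝ᵥ b = b ⬝ᵥ u := dotProduct_comm u b
    have hvu : v ⬝ᵥ u = u ⬝ᵥ v := dotProduct_comm v u
    rw [hsk, hcv, hvu] at e1
    rw [hcu] at e2
    simp only [smul_eq_mul] at e1 e2
    nlinarith [e1, e2]
  have k12 := key q₁ q₂ h1 h2
  have k13 := key q₁ q₃ h1 h3
  have k23 := key q₂ q₃ h2 h3
  rw [← hs12] at k12; rw [← hs13] at k13; rw [← hs23] at k23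
  have p12 : b ⬝ᵥ q₁ + b ⬝ᵥ q₂ = 0 := by
    rcases mul_eq_zero.mp k12 with h | h
    · exact h
    · linarith
  have p13 : b ⬝ᵥ q₁ + b ⬝ᵥ q₃ = 0 := by
    rcases mul_eq_zero.mp k13 with h | h
    · exact h
    · linarith
  have p23 : b ⬝ᵥ q₂ + b ⬝ᵥ q₃ = 0 := by
    rcases mul_eq_zero.mp k23 with h | h
    · exact h
    · linarith
  have b1 : b ⬝ᵥ q₁ = 0 := by linarith
  have b2 : b ⬝ᵥ q₂ = 0 := by linarith
  have b3 : b ⬝ᵥ q₃ = 0 := by linarith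
  -- A qᵢ = -b
  rw [b1, zero_smul] at h1
  rw [b2, zero_smul] at h2
  rw [b3, zero_smul] at h3
  have a1 : A.mulVec q₁ = -b := eq_neg_of_add_eq_zero_left h1
  have a2 : A.mulVec q₂ = -b := eq_neg_of_add_eq_zero_left h2
  have a3 : A.mulVec q₃ = -b := eq_neg_of_add_eq_zero_left h3
  -- extract a dependence relation
  obtain ⟨g, hg, i, hgi⟩ := Fintype.not_linearIndependent_iff.mp hdep
  have hrel : g 0 • q₁ + g 1 • q₂ + g 2 • q₃ = 0 := by
    have := hg
    simpa [Fin.sum_univ_three, add_assoc] using this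
  by_cases hsum : g 0 + g 1 + g 2 = 0
  · -- impossible: three distinct collinear unit vectors
    exfalso
    -- dot the relation with each qᵢ and combine with hsum
    have d1 : g 0 * 1 + g 1 * s12 + g 2 * s13 = 0 := by
      have := congrArg (fun v => q₁ ⬝ᵥ v) hrel
      simpa [dotProduct_add, dotProduct_smul, hq₁, hs12, hs13,
        smul_eq_mul] using this
    have d2 : g 0 * s12 + g 1 * 1 + g 2 * s23 = 0 := by
      have := congrArg (fun v => q₂ ⬝ᵥ v) hrel
      simpa [dotProduct_add, dotProduct_smul, hq₂,
        dotProduct_comm q₂ q₁, ← hs12, hs23, smul_eq_mul] using this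
    have d3 : g 0 * s13 + g 1 * s23 + g 2 * 1 = 0 := by
      have := congrArg (fun v => q₃ ⬝ᵥ v) hrel
      simpa [dotProduct_add, dotProduct_smul, hq₃,
        dotProduct_comm q₃ q₁, dotProduct_comm q₃ q₂,
        ← hs13, ← hs23, smul_eq_mul] using this
    -- from these: gᵢ (sᵢⱼ-1) pairs; deduce g = 0
    have e1 : g 1 * (s12 - 1) + g 2 * (s13 - 1) = 0 := by linarith
    have e2 : g 0 * (s12 - 1) + g 2 * (s23 - 1) = 0 := by linarith
    have e3 : g 0 * (s13 - 1) + g 1 * (s23 - 1) = 0 := by linarith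
    have ha : s12 - 1 < 0 := by linarith
    have hb : s13 - 1 < 0 := by linarith
    have hc : s23 - 1 < 0 := by linarith
    have hg2 : g 2 = 0 := by
      have h' : g 2 * ((s13 - 1) * (s23 - 1)) = 0 := by
        linear_combination (-(1:ℝ)/2) * ((s12 - 1) * e3 - (s13 - 1) * e2 - (s23 - 1) * e1)
      have hbc : (s13 - 1) * (s23 - 1) > 0 := mul_pos_of_neg_of_neg hb hc
      rcases mul_eq_zero.mp h' with h | h
      · exact h
      · exact absurd h (ne_of_gt hbc)
    have hg1 : g 1 = 0 := by
      rw [hg2] at e1; simpa [ne_of_lt ha, sub_eq_zero] using mul_eq_zero.mp (by linarith : g 1 * (s12 - 1) = 0)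
    have hg0 : g 0 = 0 := by
      rw [hg2] at e2; simpa [ne_of_lt ha, sub_eq_zero] using mul_eq_zero.mp (by linarith : g 0 * (s12 - 1) = 0)
    fin_cases i <;> simp_all
  · -- apply A to the relation
    have := congrArg (A.mulVec) hrel
    rw [Matrix.mulVec_add, Matrix.mulVec_add, Matrix.mulVec_smul, Matrix.mulVec_smul,
      Matrix.mulVec_smul, a1, a2, a3, Matrix.mulVec_zero] at this
    have hb' : (g 0 + g 1 + g 2) • b = 0 := by
      have h' : -(g 0 • b) + -(g 1 • b) + -(g 2 • b) = 0 := by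
        simpa [smul_neg] using this
      have h'' : g 0 • b + g 1 • b + g 2 • b = 0 := by
        have := congrArg Neg.neg h'
        simpa [neg_add, add_comm, add_assoc, add_left_comm] using this
      rw [add_smul, add_smul]
      exact h''
    rcases smul_eq_zero.mp hb' with h | h
    · exact absurd h hsum
    · exact h
end
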